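/- Fix positive integers w₁, w₂ (weights). For a formal power series F ∈ ℂ[[x, y]] (formal power series in two variables over ℂ), define its weighted order w(F) := inf{ w₁·a + w₂·b : the coefficient of x^a y^b in F is nonzero } ∈ ℕ ∪ {∞}. Let u ∈ ℂ[[x, y]] be a unit (equivalently, its constant coefficient is nonzero), let f ∈ ℂ[[x, y]], and let g ∈ ℂ[[x, y]] be obtained from f by substituting u·x for the first variable and y for the second variable (this substitution is well defined since u·x and y have zero constant term). Then the weighted order of u·x equals w₁, and w(g) = w(f). (Lemma A.3 of the paper on invariance of weighted order under a unit change of coordinate.) -/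

import Mathlib

open MvPowerSeries

/-- The weighted order of a formal power series `F ∈ ℂ[[x, y]]` with respect to weights
`w₁, w₂`: the infimum of `w₁·a + w₂·b` over monomials `x^a y^b` with nonzero coefficient
(with value `⊤` for `F = 0`). -/
noncomputable def weightedOrder (w₁ w₂ : ℕ) (F : MvPowerSeries (Fin 2) ℂ) : ℕ∞ :=
  ⨅ (d : Fin 2 →₀ ℕ) (_ : MvPowerSeries.coeff d F ≠ 0),
    ((w₁ * d 0 + w₂ * d 1 : ℕ) : ℕ∞)

lemma weightedOrder_le {w₁ w₂ : ℕ} {F : MvPowerSeries (Fin 2) ℂ} {d : Fin 2 →₀ ℕ}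
    (h : MvPowerSeries.coeff d F ≠ 0) :
    weightedOrder w₁ w₂ F ≤ ((w₁ * d 0 + w₂ * d 1 : ℕ) : ℕ∞) :=
  iInf₂_le d h

lemma le_weightedOrder' {w₁ w₂ : ℕ} {F : MvPowerSeries (Fin 2) ℂ} {n : ℕ∞}
    (h : ∀ d : Fin 2 →₀ ℕ, MvPowerSeries.coeff d F ≠ 0 →
      n ≤ ((w₁ * d 0 + w₂ * d 1 : ℕ) : ℕ∞)) :
    n ≤ weightedOrder w₁ w₂ F :=
  le_iInf₂ h

/-- Lemma A.3: if `u ∈ ℂ[[x, y]]` is a unit and `g(x, y) = f(u·x, y)`, then the weighted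
order of `u·x` is `w₁` and `w(g) = w(f)`. Here `g` is characterized coefficientwise:
`g = Σ_d (coeff_d f)·u^{d₀}·x^{d₀}·y^{d₁}`, i.e.
`coeff_e g = Σ_{d ≤ e} (coeff_d f)·(coeff_{e-d} (u^{d₀}))`. -/
theorem weightedOrder_invariant_under_unit_coordinate_change
    (w₁ w₂ : ℕ) (hw₁ : 0 < w₁) (hw₂ : 0 < w₂)
    (u f g : MvPowerSeries (Fin 2) ℂ)
    (hu : MvPowerSeries.constantCoeff u ≠ 0)
    (hg : ∀ e : Fin 2 →₀ ℕ, MvPowerSeries.coeff e g =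
      ∑ d ∈ Finset.Iic e,
        MvPowerSeries.coeff d f * MvPowerSeries.coeff (e - d) (u ^ (d 0))) :
    weightedOrder w₁ w₂ (u * MvPowerSeries.X 0) = (w₁ : ℕ∞) ∧
      weightedOrder w₁ w₂ g = weightedOrder w₁ w₂ f := by
  classical
  have hcoeffX : ∀ m : Fin 2 →₀ ℕ, MvPowerSeries.coeff m (u * MvPowerSeries.X 0) =
      if Finsupp.single (0 : Fin 2) 1 ≤ m then
        MvPowerSeries.coeff (m - Finsupp.single 0 1) u else 0 := by
    intro m
    rw [show (MvPowerSeries.X 0 : MvPowerSeries (Fin 2) ℂ)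
        = MvPowerSeries.monomial (Finsupp.single 0 1) 1 from rfl,
      MvPowerSeries.coeff_mul_monomial]
    simp
  constructor
  · apply le_antisymm
    · have h1 : MvPowerSeries.coeff (Finsupp.single (0 : Fin 2) 1)
          (u * MvPowerSeries.X 0) ≠ 0 := by
        rw [hcoeffX]
        simpa using hu
      have := weightedOrder_le (w₁ := w₁) (w₂ := w₂) h1
      simpa using this
    · apply le_weightedOrder'
      intro d hd
      rw [hcoeffX] at hd
      by_cases h : Finsupp.single (0 : Fin 2) 1 ≤ d
      · have h0 : 1 ≤ d 0 := by
          have := h 0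
          simpa using this
        have : w₁ ≤ w₁ * d 0 + w₂ * d 1 := by nlinarith
        exact_mod_cast this
      · simp [h] at hd
  · -- w(g) = w(f)
    have hWadd : ∀ d e : Fin 2 →₀ ℕ, d ≤ e →
        w₁ * e 0 + w₂ * e 1 = (w₁ * d 0 + w₂ * d 1) + (w₁ * (e - d) 0 + w₂ * (e - d) 1) := by
      intro d e hde
      have h0 : d 0 ≤ e 0 := hde 0
      have h1 : d 1 ≤ e 1 := hde 1
      have e0 : (e - d) 0 = e 0 - d 0 := Finsupp.tsub_apply e d 0
      have e1 : (e - d) 1 = e 1 - d 1 := Finsupp.tsub_apply e d 1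
      obtain ⟨a, ha⟩ := Nat.exists_eq_add_of_le h0
      obtain ⟨b, hb⟩ := Nat.exists_eq_add_of_le h1
      rw [e0, e1, ha, hb, Nat.add_sub_cancel_left, Nat.add_sub_cancel_left]
      ring
    apply le_antisymm
    · -- w(g) ≤ w(f): via minimal element
      by_cases hf : ∃ d : Fin 2 →₀ ℕ, MvPowerSeries.coeff d f ≠ 0
      · set S : Set ℕ := {n | ∃ d : Fin 2 →₀ ℕ, MvPowerSeries.coeff d f ≠ 0 ∧
          w₁ * d 0 + w₂ * d 1 = n} with hS
        have hSne : S.Nonempty := by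
          obtain ⟨d, hd⟩ := hf
          exact ⟨_, d, hd, rfl⟩
        obtain ⟨e, he, heW⟩ : ∃ e, MvPowerSeries.coeff e f ≠ 0 ∧
            w₁ * e 0 + w₂ * e 1 = sInf S := Nat.sInf_mem hSne
        have hmin : ∀ d : Fin 2 →₀ ℕ, MvPowerSeries.coeff d f ≠ 0 →
            sInf S ≤ w₁ * d 0 + w₂ * d 1 := fun d hd => Nat.sInf_le ⟨d, hd, rfl⟩
        have hgE : MvPowerSeries.coeff e g ≠ 0 := by
          rw [hg e, Finset.sum_eq_single e]
          · have : MvPowerSeries.coeff (e - e) (u ^ e 0)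
                = (MvPowerSeries.constantCoeff u) ^ e 0 := by
              simp [MvPowerSeries.coeff_zero_eq_constantCoeff, map_pow]
            rw [this]
            exact mul_ne_zero he (pow_ne_zero _ hu)
          · intro d hd hdne
            by_contra hc
            have hdf : MvPowerSeries.coeff d f ≠ 0 := left_ne_zero_of_mul hc
            have hde : d ≤ e := Finset.mem_Iic.mp hd
            have := hWadd d e hde
            have hlt : (w₁ * d 0 + w₂ * d 1) < w₁ * e 0 + w₂ * e 1 := by
              have hne : e - d ≠ 0 := by
                intro h0
                apply hdne
                ext i
                have := Finsupp.tsub_apply e d i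
                have hz : (e - d) i = 0 := by rw [h0]; simp
                have hi := hde i
                omega
              have : (e - d) 0 ≠ 0 ∨ (e - d) 1 ≠ 0 := by
                by_contra hcc
                push_neg at hcc
                apply hne
                ext i
                fin_cases i
                · simpa using hcc.1
                · simpa using hcc.2
              rcases this with h | h <;> nlinarith [Nat.pos_of_ne_zero h]
            have := hmin d hdf
            omega
          · intro h
            exact absurd (Finset.mem_Iic.mpr le_rfl) h
        calc weightedOrder w₁ w₂ g ≤ _ := weightedOrder_le hgE
          _ = ((w₁ * e 0 + w₂ * e 1 : ℕ) : ℕ∞) := rfl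
          _ ≤ weightedOrder w₁ w₂ f := by
            apply le_weightedOrder'
            intro d hd
            exact_mod_cast heW ▸ hmin d hd
      · push_neg at hf
        have : weightedOrder w₁ w₂ f = ⊤ := by
          apply le_antisymm le_top
          apply le_weightedOrder'
          intro d hd
          exact absurd (hf d) hd
        -- g = 0 too, so both ⊤
        have hgtop : weightedOrder w₁ w₂ g = ⊤ := by
          apply le_antisymm le_top
          apply le_weightedOrder'
          intro e he
          exfalso
          apply he
          rw [hg e]
          apply Finset.sum_eq_zero
          intro d _
          rw [hf d, zero_mul]
        rw [this, hgtop]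
    · -- w(f) ≤ w(g)
      apply le_weightedOrder'
      intro e he
      rw [hg e] at he
      obtain ⟨d, hd, hne⟩ := Finset.exists_ne_zero_of_sum_ne_zero he
      have hdf : MvPowerSeries.coeff d f ≠ 0 := left_ne_zero_of_mul hne
      have hde : d ≤ e := Finset.mem_Iic.mp hd
      calc weightedOrder w₁ w₂ f ≤ _ := weightedOrder_le hdf
        _ ≤ ((w₁ * e 0 + w₂ * e 1 : ℕ) : ℕ∞) := by
          have := hWadd d e hde
          have : w₁ * d 0 + w₂ * d 1 ≤ w₁ * e 0 + w₂ * e 1 := by omega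
          exact_mod_cast this
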